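/- arXiv:2106.00054 — 5 statements merged into one kernel-verified Lean document; each statement's English description precedes it below -/
import Mathlib

section
/- Let $I, J \subset \mathbb{R}$ be intervals and $f : I \to J$ an $L$-bi-Lipschitz homeomorphism with $L \geq 1$. Then for every $\alpha$ with $1 < \alpha \leq L$, $f$ can be written as $f = f_2 \circ f_1$ where $f_1 : I \to \mathbb{R}$ is $\alpha$-bi-Lipschitz and $f_2$ is $(L/\alpha)$-bi-Lipschitz. (One may take $f_1(x) = \int_{x_0}^x |f'(t)|^{\lambda}\,dt$ with $\lambda = \log_L \alpha$.) -/
open Set Finset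

namespace BLD

/-- the elementary "interpolated slope" quantity -/
noncomputable def T (f : ℝ → ℝ) (lam a b : ℝ) : ℝ :=
  (f b - f a) ^ lam * (b - a) ^ (1 - lam)

noncomputable def PS (f : ℝ → ℝ) (lam : ℝ) (u : ℕ → ℝ) (n : ℕ) : ℝ :=
  ∑ i ∈ Finset.range n, T f lam (u i) (u (i + 1))

def IsPart (x y : ℝ) (u : ℕ → ℝ) (n : ℕ) : Prop :=
  Monotone u ∧ u 0 = x ∧ ∀ i, n ≤ i → u i = y

noncomputable def SS (f : ℝ → ℝ) (lam x y : ℝ) : Set ℝ :=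
  {s | ∃ n u, IsPart x y u n ∧ s = PS f lam u n}

noncomputable def V (f : ℝ → ℝ) (lam x y : ℝ) : ℝ := sInf (SS f lam x y)

/-- two-term Hölder superadditivity -/
lemma super {lam : ℝ} (hlam0 : 0 < lam) (hlam1 : lam ≤ 1)
    {p1 s1 p2 s2 : ℝ} (hp1 : 0 ≤ p1) (hs1 : 0 ≤ s1) (hp2 : 0 ≤ p2) (hs2 : 0 ≤ s2) :
    p1 ^ lam * s1 ^ (1 - lam) + p2 ^ lam * s2 ^ (1 - lam)
      ≤ (p1 + p2) ^ lam * (s1 + s2) ^ (1 - lam) := by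
  rcases eq_or_lt_of_le hlam1 with h1 | h1
  · rw [h1]; simp [Real.rpow_one]
  have h1' : 0 < 1 - lam := by linarith
  rcases (add_nonneg hp1 hp2).eq_or_lt' with hP | hP
  · have hp1' : p1 = 0 := by linarith
    have hp2' : p2 = 0 := by linarith
    simp [hp1', hp2', Real.zero_rpow hlam0.ne']
  rcases (add_nonneg hs1 hs2).eq_or_lt' with hS | hS
  · have hs1' : s1 = 0 := by linarith
    have hs2' : s2 = 0 := by linarith
    simp [hs1', hs2', Real.zero_rpow h1'.ne']
  set P := p1 + p2 with hPdef
  set S := s1 + s2 with hSdef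
  have hPS : 0 ≤ P ^ lam * S ^ (1 - lam) :=
    mul_nonneg (Real.rpow_nonneg hP.le _) (Real.rpow_nonneg hS.le _)
  have key : ∀ p s : ℝ, 0 ≤ p → 0 ≤ s →
      p ^ lam * s ^ (1 - lam) ≤
        P ^ lam * S ^ (1 - lam) * (lam * (p / P) + (1 - lam) * (s / S)) := by
    intro p s hp hs
    have hgm := Real.geom_mean_le_arith_mean2_weighted hlam0.le h1'.le
      (div_nonneg hp hP.le) (div_nonneg hs hS.le) (by ring)
    have heq : p ^ lam * s ^ (1 - lam) =
        P ^ lam * S ^ (1 - lam) * ((p / P) ^ lam * (s / S) ^ (1 - lam)) := by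
      rw [Real.div_rpow hp hP.le, Real.div_rpow hs hS.le]
      have h2 : (P : ℝ) ^ lam ≠ 0 := (Real.rpow_pos_of_pos hP _).ne'
      have h3 : (S : ℝ) ^ lam ≠ 0 := (Real.rpow_pos_of_pos hS _).ne'
      have h4 : (S : ℝ) ^ (1 - lam) ≠ 0 := (Real.rpow_pos_of_pos hS _).ne'
      field_simp
    rw [heq]
    exact mul_le_mul_of_nonneg_left hgm hPS
  have k1 := key p1 s1 hp1 hs1
  have k2 := key p2 s2 hp2 hs2
  have hsum : (lam * (p1 / P) + (1 - lam) * (s1 / S)) +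
      (lam * (p2 / P) + (1 - lam) * (s2 / S)) = 1 := by
    field_simp
    ring
  nlinarith [hPS]

lemma T_self (f : ℝ → ℝ) {lam : ℝ} (hlam0 : 0 < lam) (a : ℝ) : T f lam a a = 0 := by
  simp [T, Real.zero_rpow hlam0.ne']


/-- ordered two-sided bi-Lipschitz (for a monotone function) -/
def Good (I : Set ℝ) (f : ℝ → ℝ) (L : ℝ) : Prop :=
  ∀ a ∈ I, ∀ b ∈ I, a ≤ b → L⁻¹ * (b - a) ≤ f b - f a ∧ f b - f a ≤ L * (b - a)

lemma T_bounds {I : Set ℝ} {f : ℝ → ℝ} {L lam : ℝ}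
    (hL : 1 < L) (hlam0 : 0 < lam) (hlam1 : lam ≤ 1) (hg : Good I f L)
    {a b : ℝ} (ha : a ∈ I) (hb : b ∈ I) (hab : a ≤ b) :
    ((L ^ lam)⁻¹ * (b - a) ≤ T f lam a b ∧ T f lam a b ≤ L ^ lam * (b - a)) ∧
    ((L ^ lam / L) * (f b - f a) ≤ T f lam a b ∧ T f lam a b ≤ (L / L ^ lam) * (f b - f a)) := by
  obtain ⟨h1, h2⟩ := hg a ha b hb hab
  have hL0 : (0 : ℝ) < L := by linarith
  have hA : (0 : ℝ) < L ^ lam := Real.rpow_pos_of_pos hL0 _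
  have hs : (0 : ℝ) ≤ b - a := by linarith
  set s : ℝ := b - a with hsdef
  set p : ℝ := f b - f a with hpdef
  rcases hs.eq_or_lt' with hs0 | hs0
  · have hp0 : p = 0 := by
      have := h2; have := h1
      have hinv : (0:ℝ) < L⁻¹ := by positivity
      nlinarith
    rw [T, ← hpdef, ← hsdef, hp0, hs0, Real.zero_rpow hlam0.ne', zero_mul]
    norm_num
  have hp0 : (0 : ℝ) < p := lt_of_lt_of_le (by positivity) h1
  have hTdef : T f lam a b = p ^ lam * s ^ (1 - lam) := rfl
  have hsplit_s : s ^ lam * s ^ (1 - lam) = s := by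
    rw [← Real.rpow_add hs0]; norm_num
  have hsplit_p : p ^ lam * p ^ (1 - lam) = p := by
    rw [← Real.rpow_add hp0]; norm_num
  have hLsub : L ^ (1 - lam) = L / L ^ lam := by
    rw [Real.rpow_sub hL0, Real.rpow_one]
  refine ⟨⟨?_, ?_⟩, ?_, ?_⟩
  · -- (L^lam)⁻¹ * s ≤ T
    have : (L⁻¹ * s) ^ lam ≤ p ^ lam :=
      Real.rpow_le_rpow (by positivity) h1 hlam0.le
    rw [Real.mul_rpow (by positivity) hs, Real.inv_rpow hL0.le] at this
    calc (L ^ lam)⁻¹ * s = (L ^ lam)⁻¹ * s ^ lam * s ^ (1 - lam) := by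
          rw [mul_assoc, hsplit_s]
      _ ≤ p ^ lam * s ^ (1 - lam) :=
          mul_le_mul_of_nonneg_right this (Real.rpow_nonneg hs _)
      _ = T f lam a b := hTdef.symm
  · -- T ≤ L^lam * s
    have : p ^ lam ≤ (L * s) ^ lam :=
      Real.rpow_le_rpow hp0.le h2 hlam0.le
    rw [Real.mul_rpow hL0.le hs] at this
    calc T f lam a b = p ^ lam * s ^ (1 - lam) := hTdef
      _ ≤ L ^ lam * s ^ lam * s ^ (1 - lam) :=
          mul_le_mul_of_nonneg_right this (Real.rpow_nonneg hs _)
      _ = L ^ lam * s := by rw [mul_assoc, hsplit_s]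
  · -- (L^lam / L) * p ≤ T
    have hps : L⁻¹ * p ≤ s := by
      rw [inv_mul_le_iff₀ hL0]; exact h2
    have : (L⁻¹ * p) ^ (1 - lam) ≤ s ^ (1 - lam) :=
      Real.rpow_le_rpow (by positivity) hps (by linarith)
    rw [Real.mul_rpow (by positivity) hp0.le, Real.inv_rpow hL0.le] at this
    calc (L ^ lam / L) * p = (L ^ (1 - lam))⁻¹ * p := by
          rw [hLsub, inv_div]
      _ = p ^ lam * ((L ^ (1 - lam))⁻¹ * p ^ (1 - lam)) := by
          rw [← mul_assoc, mul_comm (p ^ lam), mul_assoc, hsplit_p]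
      _ ≤ p ^ lam * s ^ (1 - lam) :=
          mul_le_mul_of_nonneg_left this (Real.rpow_nonneg hp0.le _)
      _ = T f lam a b := hTdef.symm
  · -- T ≤ (L / L^lam) * p
    have hps : s ≤ L * p := by
      calc s = L * (L⁻¹ * s) := by field_simp
        _ ≤ L * p := mul_le_mul_of_nonneg_left h1 hL0.le
    have : s ^ (1 - lam) ≤ (L * p) ^ (1 - lam) :=
      Real.rpow_le_rpow hs hps (by linarith)
    rw [Real.mul_rpow hL0.le hp0.le] at this
    calc T f lam a b = p ^ lam * s ^ (1 - lam) := hTdef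
      _ ≤ p ^ lam * (L ^ (1 - lam) * p ^ (1 - lam)) :=
          mul_le_mul_of_nonneg_left this (Real.rpow_nonneg hp0.le _)
      _ = L ^ (1 - lam) * p := by
          rw [← mul_assoc, mul_comm (p ^ lam), mul_assoc, hsplit_p]
      _ = (L / L ^ lam) * p := by rw [hLsub]


lemma part_mem {I : Set ℝ} (hI : I.OrdConnected) {x y : ℝ} (hx : x ∈ I) (hy : y ∈ I)
    {u : ℕ → ℝ} {n : ℕ} (hu : IsPart x y u n) (i : ℕ) : u i ∈ I := by
  refine hI.out hx hy ⟨?_, ?_⟩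
  · rw [← hu.2.1]; exact hu.1 (Nat.zero_le i)
  · rw [← hu.2.2 (n + i) (Nat.le_add_right n i)]; exact hu.1 (Nat.le_add_left i n)

lemma trivPart {x y : ℝ} (hxy : x ≤ y) :
    IsPart x y (fun i => if i = 0 then x else y) 1 := by
  refine ⟨?_, by simp, ?_⟩
  · intro i j hij
    dsimp only
    split_ifs with h1 h2
    · exact le_refl x
    · exact hxy
    · omega
    · exact le_refl y
  · intro i hi
    simp only [if_neg (by omega : ¬ i = 0)]

lemma T_mem_SS {f : ℝ → ℝ} {lam x y : ℝ} (hxy : x ≤ y) : T f lam x y ∈ SS f lam x y := by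
  refine ⟨1, _, trivPart hxy, ?_⟩
  simp [PS, T]

lemma concat_mem {f : ℝ → ℝ} {lam x y z : ℝ} {s t : ℝ}
    (hs : s ∈ SS f lam x y) (ht : t ∈ SS f lam y z) : s + t ∈ SS f lam x z := by
  obtain ⟨n, u, hu, rfl⟩ := hs
  obtain ⟨m, v, hv, rfl⟩ := ht
  set w : ℕ → ℝ := fun i => if i ≤ n then u i else v (i - n) with hwdef
  have hwv : ∀ j, w (n + j) = v j := by
    intro j
    rcases Nat.eq_zero_or_pos j with hj | hj
    · subst hj
      show w (n + 0) = v 0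
      simp only [hwdef, Nat.add_zero, if_pos (le_refl n)]
      rw [hu.2.2 n le_rfl, hv.2.1]
    · simp only [hwdef, if_neg (by omega : ¬ n + j ≤ n)]
      congr 1
      omega
  refine ⟨n + m, w, ⟨?_, ?_, ?_⟩, ?_⟩
  · intro i j hij
    simp only [hwdef]
    split_ifs with h1 h2
    · exact hu.1 hij
    · calc u i ≤ u n := hu.1 h1
        _ = y := hu.2.2 n le_rfl
        _ = v 0 := hv.2.1.symm
        _ ≤ v (j - n) := hv.1 (Nat.zero_le _)
    · omega
    · exact hv.1 (by omega)
  · simp only [hwdef, if_pos (Nat.zero_le n)]; exact hu.2.1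
  · intro i hi
    by_cases h : i ≤ n
    · have hm : m = 0 := by omega
      have hi' : i = n := by omega
      have hwi : w i = u n := by rw [hi']; simp only [hwdef, if_pos (le_refl n)]
      rw [hwi, hu.2.2 n le_rfl, ← hv.2.1, hv.2.2 0 (by omega)]
    · simp only [hwdef, if_neg h]
      exact hv.2.2 (i - n) (by omega)
  · have hwu : ∀ i, i ≤ n → w i = u i := by
      intro i hi
      simp only [hwdef, if_pos hi]
    simp only [PS]
    rw [Finset.sum_range_add]
    congr 1
    · apply Finset.sum_congr rfl
      intro i hi
      have hi' : i < n := Finset.mem_range.mp hi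
      rw [hwu i (by omega), hwu (i + 1) (by omega)]
    · apply Finset.sum_congr rfl
      intro j hj
      have h2 : w (n + j + 1) = v (j + 1) := hwv (j + 1)
      rw [hwv j, h2]

section Vlemmas

variable {I : Set ℝ} {f : ℝ → ℝ} {L lam : ℝ}

lemma PS_lb (hI : I.OrdConnected) (hL : 1 < L) (hlam0 : 0 < lam) (hlam1 : lam ≤ 1)
    (hg : Good I f L) {x y : ℝ} (hx : x ∈ I) (hy : y ∈ I)
    {u : ℕ → ℝ} {n : ℕ} (hu : IsPart x y u n) :
    (L ^ lam)⁻¹ * (y - x) ≤ PS f lam u n ∧ (L ^ lam / L) * (f y - f x) ≤ PS f lam u n := by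
  have hmem : ∀ i, u i ∈ I := part_mem hI hx hy hu
  have hstep : ∀ i, u i ≤ u (i + 1) := fun i => hu.1 (Nat.le_succ i)
  have hTb := fun i => T_bounds hL hlam0 hlam1 hg (hmem i) (hmem (i + 1)) (hstep i)
  constructor
  · calc (L ^ lam)⁻¹ * (y - x)
        = ∑ i ∈ Finset.range n, (L ^ lam)⁻¹ * (u (i + 1) - u i) := by
          rw [← Finset.mul_sum, Finset.sum_range_sub (fun i => u i)]
          rw [hu.2.2 n le_rfl, hu.2.1]
      _ ≤ PS f lam u n := Finset.sum_le_sum fun i _ => (hTb i).1.1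
  · calc (L ^ lam / L) * (f y - f x)
        = ∑ i ∈ Finset.range n, (L ^ lam / L) * (f (u (i + 1)) - f (u i)) := by
          rw [← Finset.mul_sum, Finset.sum_range_sub (fun i => f (u i))]
          rw [hu.2.2 n le_rfl, hu.2.1]
      _ ≤ PS f lam u n := Finset.sum_le_sum fun i _ => (hTb i).2.1

lemma SS_bddBelow (hI : I.OrdConnected) (hL : 1 < L) (hlam0 : 0 < lam) (hlam1 : lam ≤ 1)
    (hg : Good I f L) {x y : ℝ} (hx : x ∈ I) (hy : y ∈ I) (hxy : x ≤ y) :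
    BddBelow (SS f lam x y) := by
  refine ⟨(L ^ lam)⁻¹ * (y - x), ?_⟩
  rintro s ⟨n, u, hu, rfl⟩
  exact (PS_lb hI hL hlam0 hlam1 hg hx hy hu).1

lemma V_lb (hI : I.OrdConnected) (hL : 1 < L) (hlam0 : 0 < lam) (hlam1 : lam ≤ 1)
    (hg : Good I f L) {x y : ℝ} (hx : x ∈ I) (hy : y ∈ I) (hxy : x ≤ y) :
    (L ^ lam)⁻¹ * (y - x) ≤ V f lam x y ∧ (L ^ lam / L) * (f y - f x) ≤ V f lam x y := by
  constructor <;>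
    [skip; skip] <;>
    refine le_csInf ⟨T f lam x y, T_mem_SS hxy⟩ ?_ <;>
    rintro s ⟨n, u, hu, rfl⟩
  · exact (PS_lb hI hL hlam0 hlam1 hg hx hy hu).1
  · exact (PS_lb hI hL hlam0 hlam1 hg hx hy hu).2

lemma V_ub (hI : I.OrdConnected) (hL : 1 < L) (hlam0 : 0 < lam) (hlam1 : lam ≤ 1)
    (hg : Good I f L) {x y : ℝ} (hx : x ∈ I) (hy : y ∈ I) (hxy : x ≤ y) :
    V f lam x y ≤ L ^ lam * (y - x) ∧ V f lam x y ≤ (L / L ^ lam) * (f y - f x) := by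
  have hVT : V f lam x y ≤ T f lam x y :=
    csInf_le (SS_bddBelow hI hL hlam0 hlam1 hg hx hy hxy) (T_mem_SS hxy)
  have := T_bounds hL hlam0 hlam1 hg hx hy hxy
  exact ⟨hVT.trans this.1.2, hVT.trans this.2.2⟩

lemma V_self (hI : I.OrdConnected) (hL : 1 < L) (hlam0 : 0 < lam) (hlam1 : lam ≤ 1)
    (hg : Good I f L) {x : ℝ} (hx : x ∈ I) : V f lam x x = 0 := by
  have h1 := (V_ub hI hL hlam0 hlam1 hg hx hx le_rfl).1
  have h2 := (V_lb hI hL hlam0 hlam1 hg hx hx le_rfl).1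
  simp only [sub_self, mul_zero] at h1 h2
  linarith

lemma V_add (hI : I.OrdConnected) (hL : 1 < L) (hlam0 : 0 < lam) (hlam1 : lam ≤ 1)
    (hg : Good I f L) {x y z : ℝ} (hx : x ∈ I) (hy : y ∈ I) (hz : z ∈ I)
    (hxy : x ≤ y) (hyz : y ≤ z) :
    V f lam x y + V f lam y z = V f lam x z := by
  have hxz : x ≤ z := hxy.trans hyz
  apply le_antisymm
  · -- superadditivity / splitting direction
    refine le_csInf ⟨T f lam x z, T_mem_SS hxz⟩ ?_
    rintro s ⟨n, u, hu, rfl⟩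
    have hmem : ∀ i, u i ∈ I := part_mem hI hx hz hu
    set u₁ : ℕ → ℝ := fun i => min (u i) y with hu₁def
    set u₂ : ℕ → ℝ := fun i => max (u i) y with hu₂def
    have hp₁ : IsPart x y u₁ n := by
      refine ⟨fun i j hij => min_le_min (hu.1 hij) le_rfl, ?_, ?_⟩
      · simp only [hu₁def, hu.2.1, min_eq_left hxy]
      · intro i hi; simp only [hu₁def, hu.2.2 i hi, min_eq_right hyz]
    have hp₂ : IsPart y z u₂ n := by
      refine ⟨fun i j hij => max_le_max (hu.1 hij) le_rfl, ?_, ?_⟩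
      · simp only [hu₂def, hu.2.1, max_eq_right hxy]
      · intro i hi; simp only [hu₂def, hu.2.2 i hi, max_eq_left hyz]
    have hterm : ∀ i ∈ Finset.range n,
        T f lam (u₁ i) (u₁ (i + 1)) + T f lam (u₂ i) (u₂ (i + 1))
          ≤ T f lam (u i) (u (i + 1)) := by
      intro i _
      have hab : u i ≤ u (i + 1) := hu.1 (Nat.le_succ i)
      have ha : u i ∈ I := hmem i
      have hb : u (i + 1) ∈ I := hmem (i + 1)
      rcases le_total (u (i + 1)) y with h | h
      · have e1 : u₁ i = u i := min_eq_left ((hab.trans h))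
        have e2 : u₁ (i + 1) = u (i + 1) := min_eq_left h
        have e3 : u₂ i = y := max_eq_right (hab.trans h)
        have e4 : u₂ (i + 1) = y := max_eq_right h
        rw [e1, e2, e3, e4, T_self f hlam0]
        linarith
      · rcases le_total y (u i) with h' | h'
        · have e1 : u₁ i = y := min_eq_right h'
          have e2 : u₁ (i + 1) = y := min_eq_right (h'.trans hab)
          have e3 : u₂ i = u i := max_eq_left h'
          have e4 : u₂ (i + 1) = u (i + 1) := max_eq_left (h'.trans hab)
          rw [e1, e2, e3, e4, T_self f hlam0]
          linarith
        · have e1 : u₁ i = u i := min_eq_left h'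
          have e2 : u₁ (i + 1) = y := min_eq_right h
          have e3 : u₂ i = y := max_eq_right h'
          have e4 : u₂ (i + 1) = u (i + 1) := max_eq_left h
          rw [e1, e2, e3, e4]
          have g1 := hg (u i) ha y hy h'
          have g2 := hg y hy (u (i + 1)) hb h
          have hLpos : (0:ℝ) < L := by linarith
          have hinv : (0:ℝ) < L⁻¹ := by positivity
          have hsup := super hlam0 hlam1
            (p1 := f y - f (u i)) (s1 := y - u i)
            (p2 := f (u (i + 1)) - f y) (s2 := u (i + 1) - y)
            (by nlinarith [g1.1]) (by linarith) (by nlinarith [g2.1]) (by linarith)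
          calc T f lam (u i) y + T f lam y (u (i + 1))
              = (f y - f (u i)) ^ lam * (y - u i) ^ (1 - lam)
                + (f (u (i + 1)) - f y) ^ lam * (u (i + 1) - y) ^ (1 - lam) := rfl
            _ ≤ ((f y - f (u i)) + (f (u (i + 1)) - f y)) ^ lam
                * ((y - u i) + (u (i + 1) - y)) ^ (1 - lam) := hsup
            _ = T f lam (u i) (u (i + 1)) := by
                rw [T]
                ring_nf
    have hsplit : PS f lam u₁ n + PS f lam u₂ n ≤ PS f lam u n := by
      rw [PS, PS, PS, ← Finset.sum_add_distrib]
      exact Finset.sum_le_sum hterm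
    have m1 : V f lam x y ≤ PS f lam u₁ n :=
      csInf_le (SS_bddBelow hI hL hlam0 hlam1 hg hx hy hxy) ⟨n, u₁, hp₁, rfl⟩
    have m2 : V f lam y z ≤ PS f lam u₂ n :=
      csInf_le (SS_bddBelow hI hL hlam0 hlam1 hg hy hz hyz) ⟨n, u₂, hp₂, rfl⟩
    linarith
  · -- concatenation direction
    apply le_of_forall_pos_le_add
    intro ε hε
    obtain ⟨s, hs, hslt⟩ := Real.lt_sInf_add_pos ⟨T f lam x y, T_mem_SS hxy⟩ (half_pos hε)
    obtain ⟨t, ht, htlt⟩ := Real.lt_sInf_add_pos ⟨T f lam y z, T_mem_SS hyz⟩ (half_pos hε)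
    have hcat : s + t ∈ SS f lam x z := concat_mem hs ht
    have : V f lam x z ≤ s + t :=
      csInf_le (SS_bddBelow hI hL hlam0 hlam1 hg hx hz hxz) hcat
    have hV1 : sInf (SS f lam x y) = V f lam x y := rfl
    have hV2 : sInf (SS f lam y z) = V f lam y z := rfl
    rw [hV1] at hslt
    rw [hV2] at htlt
    linarith

end Vlemmas

lemma aux (I : Set ℝ) (hI : I.OrdConnected) (hne : I.Nonempty) (f : ℝ → ℝ) (L α : ℝ)
    (hL : 1 < L) (hα1 : 1 < α) (hαL : α ≤ L) (hmono : MonotoneOn f I)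
    (hbl : ∀ x ∈ I, ∀ y ∈ I, L⁻¹ * |x - y| ≤ |f x - f y| ∧ |f x - f y| ≤ L * |x - y|) :
    ∃ f₁ f₂ : ℝ → ℝ,
      (∀ x ∈ I, f x = f₂ (f₁ x)) ∧
      (∀ x ∈ I, ∀ y ∈ I,
        α⁻¹ * |x - y| ≤ |f₁ x - f₁ y| ∧ |f₁ x - f₁ y| ≤ α * |x - y|) ∧
      (∀ x ∈ f₁ '' I, ∀ y ∈ f₁ '' I,
        (L / α)⁻¹ * |x - y| ≤ |f₂ x - f₂ y| ∧ |f₂ x - f₂ y| ≤ (L / α) * |x - y|) := by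
  have hL0 : (0:ℝ) < L := by linarith
  have hα0 : (0:ℝ) < α := by linarith
  set lam : ℝ := Real.logb L α with hlamdef
  have hlam0 : 0 < lam := Real.logb_pos hL hα1
  have hlam1 : lam ≤ 1 := by
    rw [hlamdef, Real.logb, div_le_one (Real.log_pos hL)]
    exact Real.log_le_log (by linarith) hαL
  have hαeq : L ^ lam = α := Real.rpow_logb hL0 (by linarith) hα0
  have hg : Good I f L := by
    intro a ha b hb hab
    obtain ⟨l, r⟩ := hbl a ha b hb
    rw [abs_sub_comm a b, abs_of_nonneg (sub_nonneg.mpr hab), abs_sub_comm (f a) (f b),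
      abs_of_nonneg (sub_nonneg.mpr (hmono ha hb hab))] at l r
    exact ⟨l, r⟩
  obtain ⟨c, hc⟩ := hne
  set f₁ : ℝ → ℝ := fun x => if c ≤ x then V f lam c x else -V f lam x c with hf₁def
  have key : ∀ x ∈ I, ∀ y ∈ I, x ≤ y → f₁ y - f₁ x = V f lam x y := by
    intro x hx y hy hxy
    by_cases h1 : c ≤ x
    · have h2 : c ≤ y := h1.trans hxy
      simp only [hf₁def, if_pos h1, if_pos h2]
      have := V_add hI hL hlam0 hlam1 hg hc hx hy h1 hxy
      linarith
    · push_neg at h1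
      by_cases h2 : c ≤ y
      · simp only [hf₁def, if_pos h2, if_neg (not_le.mpr h1)]
        have := V_add hI hL hlam0 hlam1 hg hx hc hy h1.le h2
        linarith
      · push_neg at h2
        simp only [hf₁def, if_neg (not_le.mpr h1), if_neg (not_le.mpr h2)]
        have := V_add hI hL hlam0 hlam1 hg hx hy hc hxy h2.le
        linarith
  have ordered : ∀ x ∈ I, ∀ y ∈ I, x ≤ y →
      (α⁻¹ * (y - x) ≤ f₁ y - f₁ x ∧ f₁ y - f₁ x ≤ α * (y - x)) ∧
      ((α / L) * (f y - f x) ≤ f₁ y - f₁ x ∧ f₁ y - f₁ x ≤ (L / α) * (f y - f x)) := by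
    intro x hx y hy hxy
    have hk := key x hx y hy hxy
    have hlb := V_lb hI hL hlam0 hlam1 hg hx hy hxy
    have hub := V_ub hI hL hlam0 hlam1 hg hx hy hxy
    rw [hαeq] at hlb hub
    rw [hk]
    exact ⟨⟨hlb.1, hub.1⟩, hlb.2, hub.2⟩
  have hb1 : ∀ x ∈ I, ∀ y ∈ I,
      α⁻¹ * |x - y| ≤ |f₁ x - f₁ y| ∧ |f₁ x - f₁ y| ≤ α * |x - y| := by
    intro x hx y hy
    rcases le_total x y with h | h
    · have ho := (ordered x hx y hy h).1
      have hnn : 0 ≤ f₁ y - f₁ x :=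
        le_trans (mul_nonneg (by positivity) (sub_nonneg.2 h)) ho.1
      rw [abs_sub_comm x y, abs_of_nonneg (sub_nonneg.2 h),
        abs_sub_comm (f₁ x) (f₁ y), abs_of_nonneg hnn]
      exact ho
    · have ho := (ordered y hy x hx h).1
      have hnn : 0 ≤ f₁ x - f₁ y :=
        le_trans (mul_nonneg (by positivity) (sub_nonneg.2 h)) ho.1
      rw [abs_of_nonneg (sub_nonneg.2 h), abs_of_nonneg hnn]
      exact ho
  have hinj : Set.InjOn f₁ I := by
    intro x hx y hy he
    have h := (hb1 x hx y hy).1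
    rw [he, sub_self, abs_zero] at h
    have habs : |x - y| ≤ 0 := by
      nlinarith [abs_nonneg (x - y), inv_pos.mpr hα0]
    have : x - y = 0 := abs_eq_zero.mp (le_antisymm habs (abs_nonneg _))
    linarith
  set f₂ : ℝ → ℝ := fun u => f (Function.invFunOn f₁ I u) with hf₂def
  have hcomp : ∀ x ∈ I, f x = f₂ (f₁ x) := by
    intro x hx
    simp only [hf₂def]
    rw [hinj.leftInvOn_invFunOn hx]
  refine ⟨f₁, f₂, hcomp, hb1, ?_⟩
  rintro u ⟨x, hx, rfl⟩ v ⟨y, hy, rfl⟩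
  rw [← hcomp x hx, ← hcomp y hy]
  have main : ∀ a ∈ I, ∀ b ∈ I, a ≤ b →
      (L / α)⁻¹ * (f₁ b - f₁ a) ≤ f b - f a ∧ f b - f a ≤ (L / α) * (f₁ b - f₁ a) := by
    intro a ha b hb hab
    have ho := ordered a ha b hb hab
    have hD : 0 ≤ f b - f a := sub_nonneg.2 (hmono ha hb hab)
    rw [inv_div]
    constructor
    · have step : (α / L) * (f₁ b - f₁ a) ≤ (α / L) * ((L / α) * (f b - f a)) :=
        mul_le_mul_of_nonneg_left ho.2.2 (by positivity)
      have e : (α / L) * ((L / α) * (f b - f a)) = f b - f a := by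
        field_simp
      linarith
    · have step : (L / α) * ((α / L) * (f b - f a)) ≤ (L / α) * (f₁ b - f₁ a) :=
        mul_le_mul_of_nonneg_left ho.2.1 (by positivity)
      have e : (L / α) * ((α / L) * (f b - f a)) = f b - f a := by
        field_simp
      linarith
  rcases le_total x y with h | h
  · have hm := main x hx y hy h
    have hVnn : 0 ≤ f₁ y - f₁ x :=
      le_trans (mul_nonneg (by positivity) (sub_nonneg.2 h)) (ordered x hx y hy h).1.1
    have hD : 0 ≤ f y - f x := sub_nonneg.2 (hmono hx hy h)
    rw [abs_sub_comm (f₁ x) (f₁ y), abs_of_nonneg hVnn,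
      abs_sub_comm (f x) (f y), abs_of_nonneg hD]
    exact hm
  · have hm := main y hy x hx h
    have hVnn : 0 ≤ f₁ x - f₁ y :=
      le_trans (mul_nonneg (by positivity) (sub_nonneg.2 h)) (ordered y hy x hx h).1.1
    have hD : 0 ≤ f x - f y := sub_nonneg.2 (hmono hy hx h)
    rw [abs_of_nonneg hVnn, abs_of_nonneg hD]
    exact hm

lemma mono_or_anti (I : Set ℝ) (hI : I.OrdConnected) (f : ℝ → ℝ) (L : ℝ) (hL : 1 ≤ L)
    (hbl : ∀ x ∈ I, ∀ y ∈ I, L⁻¹ * |x - y| ≤ |f x - f y| ∧ |f x - f y| ≤ L * |x - y|) :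
    MonotoneOn f I ∨ AntitoneOn f I := by
  have hL0 : (0:ℝ) < L := by linarith
  have hinjI : Set.InjOn f I := by
    intro x hx y hy he
    have h := (hbl x hx y hy).1
    rw [he, sub_self, abs_zero] at h
    have habs : |x - y| ≤ 0 := by
      nlinarith [abs_nonneg (x - y), inv_pos.mpr hL0]
    have : x - y = 0 := abs_eq_zero.mp (le_antisymm habs (abs_nonneg _))
    linarith
  have hlip : LipschitzOnWith (Real.toNNReal L) f I := by
    rw [lipschitzOnWith_iff_dist_le_mul]
    intro x hx y hy
    rw [Real.dist_eq, Real.dist_eq, Real.coe_toNNReal L hL0.le]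
    exact (hbl x hx y hy).2
  by_cases H : MonotoneOn f I
  · exact Or.inl H
  right
  rw [MonotoneOn] at H
  push_neg at H
  obtain ⟨a, ha, b, hb, hab, hfab⟩ := H
  have haneb : a ≠ b := fun h => by rw [h] at hfab; exact absurd le_rfl (not_le.mpr hfab)
  have hab' : a < b := lt_of_le_of_ne hab haneb
  intro x hx y hy hxy
  set m : ℝ := min a x with hm
  set M : ℝ := max b y with hM
  have hmI : m ∈ I := by
    rcases le_total a x with h | h
    · rwa [hm, min_eq_left h]
    · rwa [hm, min_eq_right h]
  have hMI : M ∈ I := by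
    rcases le_total b y with h | h
    · rwa [hM, max_eq_right h]
    · rwa [hM, max_eq_left h]
  have hmM : m ≤ M := le_trans (min_le_left a x) (le_trans hab (le_max_left b y))
  have hsub : Icc m M ⊆ I := fun t ht => hI.out hmI hMI ht
  have hcont : ContinuousOn f (Icc m M) := (hlip.mono hsub).continuousOn
  have hinj : Set.InjOn f (Icc m M) := hinjI.mono hsub
  have haI : a ∈ Icc m M := ⟨min_le_left a x, le_trans hab (le_max_left b y)⟩
  have hbI : b ∈ Icc m M := ⟨le_trans (min_le_left a x) hab, le_max_left b y⟩
  have hxI : x ∈ Icc m M := ⟨min_le_right a x, le_trans hxy (le_max_right b y)⟩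
  have hyI : y ∈ Icc m M := ⟨le_trans (min_le_right a x) hxy, le_max_right b y⟩
  rcases ContinuousOn.strictMonoOn_of_injOn_Icc' hmM hcont hinj with hmono | hanti
  · exact absurd (hmono haI hbI hab') (not_lt.mpr hfab.le)
  · rcases eq_or_lt_of_le hxy with h | h
    · rw [h]
    · exact (hanti hxI hyI h).le

theorem main'
    (I J : Set ℝ) (hI : I.OrdConnected) (hJ : J.OrdConnected)
    (f : ℝ → ℝ) (L : ℝ) (hL : 1 ≤ L)
    (hbij : Set.BijOn f I J)
    (hbl : ∀ x ∈ I, ∀ y ∈ I, L⁻¹ * |x - y| ≤ |f x - f y| ∧ |f x - f y| ≤ L * |x - y|) :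
    ∀ α : ℝ, 1 < α → α ≤ L →
      ∃ f₁ f₂ : ℝ → ℝ,
        (∀ x ∈ I, f x = f₂ (f₁ x)) ∧
        (∀ x ∈ I, ∀ y ∈ I,
          α⁻¹ * |x - y| ≤ |f₁ x - f₁ y| ∧ |f₁ x - f₁ y| ≤ α * |x - y|) ∧
        (∀ x ∈ f₁ '' I, ∀ y ∈ f₁ '' I,
          (L / α)⁻¹ * |x - y| ≤ |f₂ x - f₂ y| ∧ |f₂ x - f₂ y| ≤ (L / α) * |x - y|) := by
  intro α hα1 hαL
  have hL1 : 1 < L := lt_of_lt_of_le hα1 hαL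
  rcases Set.eq_empty_or_nonempty I with hIe | hne
  · refine ⟨id, f, ?_, ?_, ?_⟩
    · intro x hx; rw [hIe] at hx; exact absurd hx (Set.notMem_empty x)
    · intro x hx; rw [hIe] at hx; exact absurd hx (Set.notMem_empty x)
    · intro x hx; rw [hIe] at hx; simp at hx
  rcases mono_or_anti I hI f L hL hbl with hmono | hanti
  · exact aux I hI hne f L α hL1 hα1 hαL hmono hbl
  · set g : ℝ → ℝ := fun t => -(f t) with hgdef
    have hgmono : MonotoneOn g I := fun a ha b hb hab => neg_le_neg (hanti ha hb hab)
    have habs : ∀ a b : ℝ, |g a - g b| = |f a - f b| := by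
      intro a b
      rw [hgdef]
      rw [show -(f a) - -(f b) = -(f a - f b) by ring, abs_neg]
    have hblg : ∀ x ∈ I, ∀ y ∈ I, L⁻¹ * |x - y| ≤ |g x - g y| ∧ |g x - g y| ≤ L * |x - y| := by
      intro x hx y hy
      rw [habs]
      exact hbl x hx y hy
    obtain ⟨g₁, g₂, hcomp, hb1, hb2⟩ := aux I hI hne g L α hL1 hα1 hαL hgmono hblg
    refine ⟨g₁, fun u => -(g₂ u), ?_, hb1, ?_⟩
    · intro x hx
      have h := hcomp x hx
      simp only [hgdef] at h
      show f x = -(g₂ (g₁ x))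
      linarith
    · intro u hu v hv
      have h := hb2 u hu v hv
      rw [show -g₂ u - -g₂ v = -(g₂ u - g₂ v) by ring, abs_neg]
      exact h

end BLD

/-- An `L`-bi-Lipschitz homeomorphism between intervals of `ℝ` factors as
`f = f₂ ∘ f₁` with `f₁` `α`-bi-Lipschitz and `f₂` `(L/α)`-bi-Lipschitz, for any `1 < α ≤ L`. -/
theorem biLipschitz_interval_decomposition
    (I J : Set ℝ) (hI : I.OrdConnected) (hJ : J.OrdConnected)
    (f : ℝ → ℝ) (L : ℝ) (hL : 1 ≤ L)
    (hbij : Set.BijOn f I J)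
    (hbl : ∀ x ∈ I, ∀ y ∈ I, L⁻¹ * |x - y| ≤ |f x - f y| ∧ |f x - f y| ≤ L * |x - y|) :
    ∀ α : ℝ, 1 < α → α ≤ L →
      ∃ f₁ f₂ : ℝ → ℝ,
        (∀ x ∈ I, f x = f₂ (f₁ x)) ∧
        (∀ x ∈ I, ∀ y ∈ I,
          α⁻¹ * |x - y| ≤ |f₁ x - f₁ y| ∧ |f₁ x - f₁ y| ≤ α * |x - y|) ∧
        (∀ x ∈ f₁ '' I, ∀ y ∈ f₁ '' I,
          (L / α)⁻¹ * |x - y| ≤ |f₂ x - f₂ y| ∧ |f₂ x - f₂ y| ≤ (L / α) * |x - y|) :=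
  BLD.main' I J hI hJ f L hL hbij hbl
end

section
/- Let $E \subset \mathbb{R}^N$ be a bounded set and let $K = \operatorname{Hull}(E)$ be its closed convex hull. If $x, y \in K$ satisfy $|x - y| = \operatorname{diam}(K)$, then $x, y \in \overline{E}$. -/
open Set Metric RealInnerProductSpace

private lemma aux_mem_closure (N : ℕ)
    (E : Set (EuclideanSpace ℝ (Fin N))) (hE : Bornology.IsBounded E)
    (x y : EuclideanSpace ℝ (Fin N))
    (hx : x ∈ closure (convexHull ℝ E)) (hy : y ∈ closure (convexHull ℝ E))
    (hxy : dist x y = Metric.diam (closure (convexHull ℝ E))) :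
    x ∈ closure E := by
  set K := closure (convexHull ℝ E) with hK
  have hKb : Bornology.IsBounded K := (isBounded_convexHull.2 hE).closure
  set r : ℝ := Metric.diam K with hr
  have hr0 : 0 ≤ r := Metric.diam_nonneg
  have hball : ∀ p ∈ convexHull ℝ E, dist p y ≤ r := fun p hp =>
    Metric.dist_le_diam_of_mem hKb (subset_closure hp) hy
  rw [Metric.mem_closure_iff]
  intro ε hε
  set δ : ℝ := ε ^ 2 / (2 * (r + 1)) with hδ
  have h1 : (0 : ℝ) < 2 * (r + 1) := by linarith
  have hδ0 : 0 < δ := div_pos (pow_pos hε 2) h1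
  have hδe : δ * (2 * (r + 1)) = ε ^ 2 := div_mul_cancel₀ _ h1.ne'
  have hkey : 2 * δ * r < ε ^ 2 := by nlinarith
  obtain ⟨p, hp, hpx⟩ := Metric.mem_closure_iff.1 hx δ hδ0
  rw [convexHull_eq] at hp
  obtain ⟨ι, t, w, z, hw0, hw1, hz, hcm⟩ := hp
  have hpc : p = ∑ i ∈ t, w i • z i := by
    rw [← hcm, Finset.centerMass_eq_of_sum_1 _ _ hw1]
  set u : EuclideanSpace ℝ (Fin N) := x - y with hu
  have hun : ‖u‖ = r := by rw [hu, ← dist_eq_norm, hxy]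
  -- sum of w i • (z i - y) equals p - y
  have hsum : ∑ i ∈ t, w i • (z i - y) = p - y := by
    simp only [smul_sub]
    rw [Finset.sum_sub_distrib, ← Finset.sum_smul, hw1, one_smul, ← hpc]
  -- inner product lower bound
  have hin : (r : ℝ) ^ 2 - δ * r ≤ ⟪p - y, u⟫ := by
    have hdecomp : p - y = (p - x) + u := by rw [hu]; abel
    have h2 : |⟪p - x, u⟫| ≤ ‖p - x‖ * ‖u‖ := abs_real_inner_le_norm _ _
    have h3 : ‖p - x‖ ≤ δ := by
      rw [← dist_eq_norm, dist_comm]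
      exact le_of_lt hpx
    have h4 : ‖p - x‖ * ‖u‖ ≤ δ * r := by
      rw [hun]; exact mul_le_mul_of_nonneg_right h3 hr0
    have h5 : ⟪u, u⟫ = r ^ 2 := by
      rw [real_inner_self_eq_norm_sq, hun]
    rw [hdecomp, inner_add_left, h5]
    have := (abs_le.1 (h2.trans h4)).1
    linarith
  -- the key sum bound
  have hS : ∑ i ∈ t, w i * ‖z i - x‖ ^ 2 ≤ 2 * δ * r := by
    have hterm : ∀ i ∈ t, w i * ‖z i - x‖ ^ 2
        ≤ w i * (2 * r ^ 2 - 2 * ⟪z i - y, u⟫) := by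
      intro i hi
      refine mul_le_mul_of_nonneg_left ?_ (hw0 i hi)
      have hzi : ‖z i - y‖ ≤ r := by
        rw [← dist_eq_norm]; exact hball _ (subset_convexHull ℝ E (hz i hi))
      have hzr : ‖z i - y‖ ^ 2 ≤ r ^ 2 := by
        exact pow_le_pow_left₀ (norm_nonneg _) hzi 2
      have : z i - x = (z i - y) - u := by rw [hu]; abel
      rw [this, norm_sub_sq_real, hun]
      nlinarith
    calc ∑ i ∈ t, w i * ‖z i - x‖ ^ 2
        ≤ ∑ i ∈ t, w i * (2 * r ^ 2 - 2 * ⟪z i - y, u⟫) :=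
          Finset.sum_le_sum hterm
      _ = 2 * r ^ 2 - 2 * ⟪p - y, u⟫ := by
          simp only [mul_sub, Finset.sum_sub_distrib, ← Finset.mul_sum,
            ← Finset.sum_mul]
          rw [hw1, one_mul]
          congr 1
          rw [← hsum, sum_inner]
          simp only [real_inner_smul_left, Finset.mul_sum]
          exact Finset.sum_congr rfl fun i _ => by ring
      _ ≤ 2 * δ * r := by linarith
  -- conclude by contradiction
  by_contra hcon
  push_neg at hcon
  have hge : (ε : ℝ) ^ 2 ≤ ∑ i ∈ t, w i * ‖z i - x‖ ^ 2 := by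
    have : ∀ i ∈ t, w i * ε ^ 2 ≤ w i * ‖z i - x‖ ^ 2 := by
      intro i hi
      refine mul_le_mul_of_nonneg_left ?_ (hw0 i hi)
      have h6 : ε ≤ dist x (z i) := hcon _ (hz i hi)
      have h7 : dist x (z i) = ‖z i - x‖ := by
        rw [dist_eq_norm, norm_sub_rev]
      rw [h7] at h6
      exact pow_le_pow_left₀ hε.le h6 2
    calc (ε : ℝ) ^ 2 = ∑ i ∈ t, w i * ε ^ 2 := by
          rw [← Finset.sum_mul, hw1, one_mul]
      _ ≤ _ := Finset.sum_le_sum this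
  linarith

/-- If `x, y` lie in the closed convex hull `K` of a bounded set
`E ⊂ ℝ^N` and `|x - y| = diam K`, then `x, y ∈ closure E`. -/
theorem diameter_extremes_mem_closure (N : ℕ)
    (E : Set (EuclideanSpace ℝ (Fin N))) (hE : Bornology.IsBounded E)
    (x y : EuclideanSpace ℝ (Fin N))
    (hx : x ∈ closure (convexHull ℝ E)) (hy : y ∈ closure (convexHull ℝ E))
    (hxy : dist x y = Metric.diam (closure (convexHull ℝ E))) :
    x ∈ closure E ∧ y ∈ closure E :=
  ⟨aux_mem_closure N E hE x y hx hy hxy,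
   aux_mem_closure N E hE y x hy hx (by rwa [dist_comm])⟩
end

section
/- Let $E_1, \ldots, E_n$ be subsets of $\mathbb{R}^N$. There exist $l \in \{1, \ldots, n\}$ and pairwise disjoint closed convex sets $\Delta_1, \ldots, \Delta_l \subset \mathbb{R}^N$ such that each $E_i$ is contained in some $\Delta_j$ and $\sum_{j=1}^{l} \operatorname{diam}(\Delta_j) \leq \sum_{i=1}^{n} \operatorname{diam}(E_i)$. -/
open Set

open Classical in
private lemma perm_split_of_not_pairwise {α : Type*} {R : α → α → Prop} :
    ∀ L : List α, ¬ L.Pairwise R → ∃ a b M, L.Perm (a :: b :: M) ∧ ¬ R a b := by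
  intro L
  induction L with
  | nil => intro h; exact absurd List.Pairwise.nil h
  | cons c t ih =>
    intro h
    rw [List.pairwise_cons] at h
    by_cases ht : t.Pairwise R
    · have h' : ¬ ∀ a' ∈ t, R c a' := fun hall => h ⟨hall, ht⟩
      push_neg at h'
      obtain ⟨b, hb, hrb⟩ := h'
      exact ⟨c, b, t.erase b, (List.perm_cons_erase hb).cons c, hrb⟩
    · obtain ⟨a, b, M, hp, hab⟩ := ih ht
      exact ⟨a, b, c :: M,
        (hp.cons c).trans ((List.Perm.swap _ _ _).trans ((List.Perm.swap _ _ _).cons a)), hab⟩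

private lemma list_disjointification (X : Type*) [NormedAddCommGroup X] [NormedSpace ℝ X] :
    ∀ n : ℕ, ∀ L : List (Set X), L.length ≤ n → L ≠ [] →
    ∃ D : List (Set X), D ≠ [] ∧ D.length ≤ L.length ∧
      (∀ A ∈ D, IsClosed A ∧ Convex ℝ A) ∧ D.Pairwise Disjoint ∧
      (∀ A ∈ L, ∃ B ∈ D, A ⊆ B) ∧
      (D.map EMetric.diam).sum ≤ (L.map EMetric.diam).sum := by
  intro n
  induction n with
  | zero => intro L hlen hne; exact absurd (List.eq_nil_of_length_eq_zero (Nat.le_zero.mp hlen)) hne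
  | succ n ih => ?_
  intro L hlen hL
  set cch : Set X → Set X := fun A => closure (convexHull ℝ A) with hcch
  have hsub : ∀ A : Set X, A ⊆ cch A := fun A =>
    (subset_convexHull ℝ A).trans subset_closure
  have hdiam : ∀ A : Set X, EMetric.diam (cch A) = EMetric.diam A := fun A => by
    rw [hcch]; dsimp only; exact (EMetric.diam_closure _).trans (convexHull_ediam _)
  by_cases hp : L.Pairwise (fun A B => Disjoint (cch A) (cch B))
  · refine ⟨L.map cch, by simpa using hL, by simp, ?_, ?_, ?_, ?_⟩
    · rintro A hA
      simp only [List.mem_map] at hA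
      obtain ⟨B, _, rfl⟩ := hA
      exact ⟨isClosed_closure, (convex_convexHull ℝ B).closure⟩
    · exact List.Pairwise.map _ (fun a b h => h) hp
    · intro A hA
      exact ⟨cch A, List.mem_map_of_mem hA, hsub A⟩
    · rw [List.map_map]
      exact le_of_eq (congrArg List.sum (List.map_congr_left (fun A _ => hdiam A)))
  · obtain ⟨A, B, M, hperm, hAB⟩ := perm_split_of_not_pairwise L hp
    rw [Set.not_disjoint_iff] at hAB
    obtain ⟨x, hxA, hxB⟩ := hAB
    set L' : List (Set X) := (cch A ∪ cch B) :: M with hL'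
    have hLlen : L.length = M.length + 2 := by rw [hperm.length_eq]; simp
    have hlen' : L'.length ≤ n := by
      have : L'.length = M.length + 1 := by simp [hL']
      omega
    obtain ⟨D, hDne, hDlen, hDcc, hDdisj, hDcov, hDsum⟩ :=
      ih L' hlen' (by simp [hL'])
    refine ⟨D, hDne, ?_, hDcc, hDdisj, ?_, ?_⟩
    · have : L'.length = M.length + 1 := by simp [hL']
      omega
    · intro C hC
      obtain ⟨B', hB', hsubU⟩ := hDcov (cch A ∪ cch B)
        (by rw [hL']; exact List.mem_cons_self)
      have hC' : C = A ∨ C = B ∨ C ∈ M := by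
        simpa using hperm.mem_iff.mp hC
      rcases hC' with rfl | rfl | hCM
      · exact ⟨B', hB', ((hsub C).trans Set.subset_union_left).trans hsubU⟩
      · exact ⟨B', hB', ((hsub C).trans Set.subset_union_right).trans hsubU⟩
      · exact hDcov C (by rw [hL']; exact List.mem_cons_of_mem _ hCM)
    · refine hDsum.trans ?_
      have hsumL : (L.map EMetric.diam).sum = ((A :: B :: M).map EMetric.diam).sum :=
        (hperm.map EMetric.diam).sum_eq
      have h2 : EMetric.diam (cch A ∪ cch B) ≤ EMetric.diam A + EMetric.diam B := by
        calc EMetric.diam (cch A ∪ cch B) ≤ EMetric.diam (cch A) + EMetric.diam (cch B) :=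
              EMetric.diam_union' ⟨x, hxA, hxB⟩
          _ = EMetric.diam A + EMetric.diam B := by rw [hdiam, hdiam]
      rw [hsumL]
      simp only [hL', List.map_cons, List.sum_cons]
      calc EMetric.diam (cch A ∪ cch B) + (M.map EMetric.diam).sum
          ≤ (EMetric.diam A + EMetric.diam B) + (M.map EMetric.diam).sum :=
            add_le_add_left h2 _
        _ = EMetric.diam A + (EMetric.diam B + (M.map EMetric.diam).sum) := by
            rw [add_assoc]

/-- Given sets `E₁, …, Eₙ ⊂ ℝ^N`, there are `l ∈ {1,…,n}` and pairwise
disjoint closed convex sets `Δ₁, …, Δ_l` such that each `Eᵢ` is contained in some `Δⱼ` and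
`∑ diam Δⱼ ≤ ∑ diam Eᵢ` (diameters in `[0,∞]`). -/
theorem convex_disjointification (N n : ℕ) (hn : 1 ≤ n)
    (E : Fin n → Set (EuclideanSpace ℝ (Fin N))) :
    ∃ l : ℕ, 1 ≤ l ∧ l ≤ n ∧
      ∃ Δ : Fin l → Set (EuclideanSpace ℝ (Fin N)),
        (∀ j, IsClosed (Δ j) ∧ Convex ℝ (Δ j)) ∧
        (∀ j j', j ≠ j' → Disjoint (Δ j) (Δ j')) ∧
        (∀ i, ∃ j, E i ⊆ Δ j) ∧
        ∑ j, EMetric.diam (Δ j) ≤ ∑ i, EMetric.diam (E i) := by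
  obtain ⟨D, hDne, hDlen, hDcc, hDdisj, hDcov, hDsum⟩ :=
    list_disjointification (EuclideanSpace ℝ (Fin N)) n (List.ofFn E)
      (by simp) (by intro h; rw [List.ofFn_eq_nil_iff] at h; omega)
  refine ⟨D.length, List.length_pos_of_ne_nil hDne, by simpa using hDlen,
    fun j => D.get j, fun j => hDcc _ (List.get_mem D j), ?_, ?_, ?_⟩
  · intro j j' hjj'
    rcases lt_or_gt_of_ne (Fin.val_ne_of_ne hjj') with h | h
    · exact List.pairwise_iff_getElem.mp hDdisj j j' j.isLt j'.isLt h
    · exact (List.pairwise_iff_getElem.mp hDdisj j' j j'.isLt j.isLt h).symm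
  · intro i
    obtain ⟨B, hB, hsub⟩ := hDcov (E i) (List.mem_ofFn.mpr ⟨i, rfl⟩)
    obtain ⟨k, hk⟩ := List.mem_iff_get.mp hB
    exact ⟨k, by simpa only [hk] using hsub⟩
  · have h1 : ∑ j : Fin D.length, EMetric.diam (D.get j) = (D.map EMetric.diam).sum := by
      conv_rhs => rw [← List.ofFn_get D, List.map_ofFn]
      rw [List.sum_ofFn]
      rfl
    have h2 : ∑ i, EMetric.diam (E i) = ((List.ofFn E).map EMetric.diam).sum := by
      rw [List.map_ofFn, List.sum_ofFn]
      rfl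
    rw [h1, h2]
    exact hDsum
end

section
/- Let $X$ be a totally bounded metric space, $\delta > 0$, and suppose there is a family of nonempty subsets $\{X_w\}$ of $X$ indexed by a subtree $\mathcal{W}$ of finite binary words such that: $X_\varepsilon = X$; children are subsets of parents; each non-singleton $X_w$ splits as a disjoint union $X_w = X_{w1} \cup X_{w2}$ with $\operatorname{dist}(X_{w1}, X_{w2}) \geq \delta \max\{\operatorname{diam}(X_{w1}), \operatorname{diam}(X_{w2})\}$; and singletons $X_w$ have the unique child $X_{w1} = X_w$. Then $X$ is $c$-uniformly disconnected with $c = 1 + 2\delta^{-1}$: for every $x \in X$ and $0 < r < \operatorname{diam}(X)$ there is a set $E \subset X$ containing $x$ with $\operatorname{diam}(E) \leq r$ and $\operatorname{dist}(E, X \setminus E) \geq r/c$. -/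
open Set

/-- A totally bounded metric space admitting a binary tree decomposition
`{X_w}` with relative separation `δ` between siblings is `c`-uniformly disconnected with
`c = 1 + 2/δ`.  Words are lists over `Bool` (`w ++ [true]` is the child `w1`,
`w ++ [false]` the child `w2`). -/
theorem uniformlyDisconnected_of_tree {α : Type*} [MetricSpace α]
    (htb : TotallyBounded (univ : Set α))
    (δ : ℝ) (hδ : 0 < δ)
    (W : Set (List Bool)) (Xf : List Bool → Set α)
    (hprefix : ∀ (w : List Bool) (i : Bool), w ++ [i] ∈ W → w ∈ W)
    (hroot : [] ∈ W) (hXroot : Xf [] = univ)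
    (hne : ∀ w ∈ W, (Xf w).Nonempty)
    (hsub : ∀ w ∈ W, ∀ i : Bool, w ++ [i] ∈ W → Xf (w ++ [i]) ⊆ Xf w)
    (hsplit : ∀ w ∈ W, ¬ (Xf w).Subsingleton →
      w ++ [true] ∈ W ∧ w ++ [false] ∈ W ∧
      Xf w = Xf (w ++ [true]) ∪ Xf (w ++ [false]) ∧
      Disjoint (Xf (w ++ [true])) (Xf (w ++ [false])) ∧
      ∀ x ∈ Xf (w ++ [true]), ∀ y ∈ Xf (w ++ [false]),
        δ * max (Metric.diam (Xf (w ++ [true]))) (Metric.diam (Xf (w ++ [false]))) ≤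
          dist x y)
    (hsingle : ∀ w ∈ W, (Xf w).Subsingleton →
      w ++ [true] ∈ W ∧ w ++ [false] ∉ W ∧ Xf (w ++ [true]) = Xf w) :
    ∀ x : α, ∀ r : ℝ, 0 < r → r < Metric.diam (univ : Set α) →
      ∃ E : Set α, x ∈ E ∧ Metric.diam E ≤ r ∧
        ∀ y ∈ E, ∀ z ∈ Eᶜ, r / (1 + 2 / δ) ≤ dist y z := by
  classical
  intro x r hr hrd
  have hB : ∀ s : Set α, Bornology.IsBounded s := fun s =>
    htb.isBounded.subset (subset_univ s)
  have hc : (0:ℝ) < 1 + 2/δ := by positivity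
  -- core separation estimate
  have core : ∀ (T F : Set α), r < Metric.diam (T ∪ F) →
      (∀ a ∈ T, ∀ b ∈ F, δ * max (Metric.diam T) (Metric.diam F) ≤ dist a b) →
      ∀ y ∈ T, ∀ z ∈ F, r / (1 + 2/δ) ≤ dist y z := by
    intro T F hrP hsep y hy z hz
    have hT : Metric.diam T ≤ max (Metric.diam T) (Metric.diam F) := le_max_left _ _
    have hF : Metric.diam F ≤ max (Metric.diam T) (Metric.diam F) := le_max_right _ _
    have hMd : δ * max (Metric.diam T) (Metric.diam F) ≤ dist y z := hsep y hy z hz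
    have hbound : Metric.diam (T ∪ F) ≤ Metric.diam T + Metric.diam F + dist y z := by
      apply Metric.diam_le_of_forall_dist_le
      · have h1 := Metric.diam_nonneg (s := T)
        have h2 := Metric.diam_nonneg (s := F)
        have h3 := dist_nonneg (x := y) (y := z)
        linarith
      · rintro a (ha | ha) a' (ha' | ha')
        · have h1 := Metric.dist_le_diam_of_mem (hB T) ha ha'
          have h2 := Metric.diam_nonneg (s := F)
          have h3 := dist_nonneg (x := y) (y := z)
          linarith
        · have h1 := Metric.dist_le_diam_of_mem (hB T) ha hy
          have h2 := Metric.dist_le_diam_of_mem (hB F) hz ha'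
          have h3 := dist_triangle4 a y z a'
          linarith
        · have h1 := Metric.dist_le_diam_of_mem (hB F) ha hz
          have h2 := Metric.dist_le_diam_of_mem (hB T) hy ha'
          have h3 := dist_triangle4 a z y a'
          have h4 : dist z y = dist y z := dist_comm z y
          linarith
        · have h1 := Metric.dist_le_diam_of_mem (hB F) ha ha'
          have h2 := Metric.diam_nonneg (s := T)
          have h3 := dist_nonneg (x := y) (y := z)
          linarith
    have hrlt : r < Metric.diam T + Metric.diam F + dist y z := lt_of_lt_of_le hrP hbound
    rw [div_le_iff₀ hc, show dist y z * (1 + 2/δ) = dist y z * (δ + 2) / δ by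
      field_simp, le_div_iff₀ hδ]
    nlinarith [mul_lt_mul_of_pos_right hrlt hδ,
      mul_le_mul_of_nonneg_right hT hδ.le,
      mul_le_mul_of_nonneg_right hF hδ.le, hMd]
  -- the branch through x
  let nxt : List Bool → List Bool := fun w =>
    if x ∈ Xf (w ++ [true]) then w ++ [true] else w ++ [false]
  let b : ℕ → List Bool := fun n => nxt^[n] []
  have hb0 : b 0 = [] := rfl
  have hbs : ∀ n, b (n+1) = nxt (b n) := fun n => Function.iterate_succ_apply' _ _ _
  have hstep : ∀ w, w ∈ W → x ∈ Xf w →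
      nxt w ∈ W ∧ x ∈ Xf (nxt w) ∧ Xf (nxt w) ⊆ Xf w := by
    intro w hw hx
    by_cases hss : (Xf w).Subsingleton
    · obtain ⟨h1, -, h3⟩ := hsingle w hw hss
      have hxt : x ∈ Xf (w ++ [true]) := h3.symm ▸ hx
      have he : nxt w = w ++ [true] := if_pos hxt
      rw [he]
      exact ⟨h1, hxt, hsub w hw true h1⟩
    · obtain ⟨ht, hf, hun, -, -⟩ := hsplit w hw hss
      by_cases hxt : x ∈ Xf (w ++ [true])
      · have he : nxt w = w ++ [true] := if_pos hxt
        rw [he]; exact ⟨ht, hxt, hsub w hw true ht⟩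
      · have hxf : x ∈ Xf (w ++ [false]) := by
          have hx' : x ∈ Xf (w ++ [true]) ∪ Xf (w ++ [false]) := hun ▸ hx
          rcases hx' with h | h
          · exact absurd h hxt
          · exact h
        have he : nxt w = w ++ [false] := if_neg hxt
        rw [he]; exact ⟨hf, hxf, hsub w hw false hf⟩
  have hbW : ∀ n, b n ∈ W ∧ x ∈ Xf (b n) := by
    intro n
    induction n with
    | zero => exact ⟨hroot, by rw [hb0, hXroot]; trivial⟩
    | succ n ih =>
      obtain ⟨h1, h2, -⟩ := hstep (b n) ih.1 ih.2
      rw [hbs n]; exact ⟨h1, h2⟩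
  have hmono1 : ∀ n, Xf (b (n+1)) ⊆ Xf (b n) := by
    intro n
    obtain ⟨-, -, h3⟩ := hstep (b n) (hbW n).1 (hbW n).2
    rw [hbs n]; exact h3
  have hmono : ∀ n m, n ≤ m → Xf (b m) ⊆ Xf (b n) := by
    intro n m h
    induction h with
    | refl => exact subset_rfl
    | step _ ih => exact (hmono1 _).trans ih
  -- diameters eventually drop below r
  have hsmall : ∃ n, Metric.diam (Xf (b n)) ≤ r := by
    by_contra hcon
    push_neg at hcon
    have hns : ∀ n, ¬ (Xf (b n)).Subsingleton := by
      intro n hss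
      have h0 := Metric.diam_subsingleton hss
      have h1 := hcon n; rw [h0] at h1; linarith
    have key : ∀ n, ∃ yn, yn ∈ Xf (b n) ∧
        ∀ z ∈ Xf (b (n+1)), δ * r ≤ dist yn z := by
      intro n
      obtain ⟨hw, hx⟩ := hbW n
      obtain ⟨ht, hf, hun, -, hsep⟩ := hsplit (b n) hw (hns n)
      by_cases hxt : x ∈ Xf (b n ++ [true])
      · have hbn : b (n+1) = b n ++ [true] := by rw [hbs n]; exact if_pos hxt
        obtain ⟨yn, hyn⟩ := hne _ hf
        refine ⟨yn, hsub _ hw false hf hyn, fun z hz => ?_⟩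
        rw [hbn] at hz
        have h1 := hsep z hz yn hyn
        have h2 : r ≤ Metric.diam (Xf (b n ++ [true])) := by
          have h3 := hcon (n+1); rw [hbn] at h3; linarith
        have h4 : δ * r ≤ δ * max (Metric.diam (Xf (b n ++ [true])))
            (Metric.diam (Xf (b n ++ [false]))) :=
          mul_le_mul_of_nonneg_left (h2.trans (le_max_left _ _)) hδ.le
        rw [dist_comm]
        exact h4.trans h1
      · have hbn : b (n+1) = b n ++ [false] := by rw [hbs n]; exact if_neg hxt
        obtain ⟨yn, hyn⟩ := hne _ ht
        refine ⟨yn, hsub _ hw true ht hyn, fun z hz => ?_⟩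
        rw [hbn] at hz
        have h1 := hsep yn hyn z hz
        have h2 : r ≤ Metric.diam (Xf (b n ++ [false])) := by
          have h3 := hcon (n+1); rw [hbn] at h3; linarith
        have h4 : δ * r ≤ δ * max (Metric.diam (Xf (b n ++ [true])))
            (Metric.diam (Xf (b n ++ [false]))) :=
          mul_le_mul_of_nonneg_left (h2.trans (le_max_right _ _)) hδ.le
        exact h4.trans h1
    choose y hyF hy using key
    have hsep' : ∀ n m, n < m → δ * r ≤ dist (y n) (y m) := fun n m hnm =>
      hy n (y m) (hmono (n+1) m hnm (hyF m))
    obtain ⟨t, htfin, hcov⟩ := (Metric.totallyBounded_iff.mp htb) (δ * r / 2) (by positivity)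
    have hch : ∀ n, ∃ q ∈ t, y n ∈ Metric.ball q (δ * r / 2) := by
      intro n
      have h := hcov (mem_univ (y n))
      simpa using h
    choose q hqt hq using hch
    haveI := htfin.to_subtype
    obtain ⟨n, m, hnm, heq⟩ := Finite.exists_ne_map_eq_of_infinite
      (fun n => (⟨q n, hqt n⟩ : t))
    have heq' : q n = q m := congrArg Subtype.val heq
    have habs : ∀ a b' : ℕ, q a = q b' → dist (y a) (y b') < δ * r := by
      intro a b' hpe
      calc dist (y a) (y b') ≤ dist (y a) (q a) + dist (q a) (y b') := dist_triangle _ _ _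
        _ < δ*r/2 + δ*r/2 := add_lt_add (Metric.mem_ball.mp (hq a))
            (by rw [hpe, dist_comm]; exact Metric.mem_ball.mp (hq b'))
        _ = δ*r := by ring
    rcases hnm.lt_or_gt with h | h
    · have h1 := hsep' n m h
      have h2 := habs n m heq'
      linarith
    · have h1 := hsep' m n h
      have h2 := habs m n heq'.symm
      linarith
  -- first index with small diameter
  have hn0 : Metric.diam (Xf (b (Nat.find hsmall))) ≤ r := Nat.find_spec hsmall
  have hn0min : ∀ k, k < Nat.find hsmall → r < Metric.diam (Xf (b k)) := fun k hk =>
    lt_of_not_ge (Nat.find_min hsmall hk)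
  have hn0pos : 0 < Nat.find hsmall := by
    rcases Nat.eq_zero_or_pos (Nat.find hsmall) with h0 | h0
    · exfalso
      have h1 := hn0
      rw [h0, hb0, hXroot] at h1
      linarith
    · exact h0
  refine ⟨Xf (b (Nat.find hsmall)), (hbW _).2, hn0, ?_⟩
  intro y hy z hz
  have hz' : z ∉ Xf (b (Nat.find hsmall)) := hz
  obtain ⟨k, hklt, hzk, hk1⟩ : ∃ k, k < Nat.find hsmall ∧ z ∈ Xf (b k) ∧
      z ∉ Xf (b (k+1)) := by
    have hzex : ∃ j, z ∉ Xf (b (j+1)) :=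
      ⟨Nat.find hsmall - 1, by
        rw [show Nat.find hsmall - 1 + 1 = Nat.find hsmall by omega]; exact hz'⟩
    refine ⟨Nat.find hzex, ?_, ?_, Nat.find_spec hzex⟩
    · exact lt_of_le_of_lt
        (Nat.find_le (by
          rw [show Nat.find hsmall - 1 + 1 = Nat.find hsmall by omega]; exact hz'))
        (Nat.sub_lt hn0pos one_pos)
    · rcases Nat.eq_zero_or_pos (Nat.find hzex) with h0 | h0
      · rw [h0, hb0, hXroot]; trivial
      · have hm := Nat.find_min hzex
          (show Nat.find hzex - 1 < Nat.find hzex from Nat.sub_lt h0 one_pos)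
        rw [not_not, show Nat.find hzex - 1 + 1 = Nat.find hzex by omega] at hm
        exact hm
  have hrk : r < Metric.diam (Xf (b k)) := hn0min k hklt
  have hns : ¬ (Xf (b k)).Subsingleton := by
    intro hss
    have h0 := Metric.diam_subsingleton hss
    rw [h0] at hrk; linarith
  obtain ⟨hw, hx⟩ := hbW k
  obtain ⟨ht, hf, hun, -, hsep⟩ := hsplit (b k) hw hns
  have hyk : y ∈ Xf (b (k+1)) := hmono (k+1) (Nat.find hsmall) hklt hy
  by_cases hxt : x ∈ Xf (b k ++ [true])
  · have hbn : b (k+1) = b k ++ [true] := by rw [hbs k]; exact if_pos hxt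
    have hyT : y ∈ Xf (b k ++ [true]) := by rw [← hbn]; exact hyk
    have hzF : z ∈ Xf (b k ++ [false]) := by
      have hcup : z ∈ Xf (b k ++ [true]) ∪ Xf (b k ++ [false]) := hun ▸ hzk
      rcases hcup with h | h
      · rw [← hbn] at h; exact absurd h hk1
      · exact h
    have hrP : r < Metric.diam (Xf (b k ++ [true]) ∪ Xf (b k ++ [false])) := by
      rw [← hun]; exact hrk
    exact core _ _ hrP hsep y hyT z hzF
  · have hbn : b (k+1) = b k ++ [false] := by rw [hbs k]; exact if_neg hxt
    have hyF' : y ∈ Xf (b k ++ [false]) := by rw [← hbn]; exact hyk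
    have hzT : z ∈ Xf (b k ++ [true]) := by
      have hcup : z ∈ Xf (b k ++ [true]) ∪ Xf (b k ++ [false]) := hun ▸ hzk
      rcases hcup with h | h
      · exact h
      · rw [← hbn] at h; exact absurd h hk1
    have hrP : r < Metric.diam (Xf (b k ++ [true]) ∪ Xf (b k ++ [false])) := by
      rw [← hun]; exact hrk
    rw [dist_comm]
    exact core _ _ hrP hsep z hzT y hyF'
end

section
/- Let $X$ be a $c$-uniformly disconnected metric space ($c \geq 1$). Then there is a family of subsets $\{X_w\}_{w \in \mathcal{W}}$ indexed by a prefix-closed set $\mathcal{W} \subset \{1,2\}^*$ of binary words with $X_\varepsilon = X$, such that: each non-singleton $X_w$ decomposes as $X_w = X_{w1} \sqcup X_{w2}$ with $\operatorname{diam}(X_{w1}) \leq \tfrac12 \operatorname{diam}(X_w)$ and $\operatorname{dist}(X_{w1}, X_{w2}) \geq (2c)^{-1} \max\{\operatorname{diam}(X_{w1}), \operatorname{diam}(X_{w2})\}$; and each singleton $X_w$ has the single child $X_{w1} = X_w$. -/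
open Set

/-- The specification of a split of `S` into `S₁`, `S₂`. -/
def SplitSpec {α : Type*} [MetricSpace α] (c : ℝ) (S S₁ S₂ : Set α) : Prop :=
  S₁.Nonempty ∧ S₂.Nonempty ∧ S = S₁ ∪ S₂ ∧ Disjoint S₁ S₂ ∧
  Metric.diam S₁ ≤ (1/2) * Metric.diam S ∧
  (∀ x ∈ S₁, ∀ y ∈ S₂,
    (2 * c)⁻¹ * max (Metric.diam S₁) (Metric.diam S₂) ≤ dist x y) ∧
  (EMetric.diam (univ : Set α) = ⊤ → EMetric.diam S₁ = ⊤ ∧ EMetric.diam S₂ = ⊤)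

theorem exists_split {α : Type*} [MetricSpace α] [Nonempty α]
    (c : ℝ) (hc : 1 ≤ c)
    (hud : ∀ x : α, ∀ r : ℝ, 0 < r → r < Metric.diam (univ : Set α) →
      ∃ E : Set α, x ∈ E ∧ Metric.diam E ≤ r ∧ ∀ y ∈ E, ∀ z ∈ Eᶜ, r / c ≤ dist y z)
    (S : Set α) (hS : S.Nonempty) (hns : ¬ S.Subsingleton)
    (hinv : EMetric.diam (univ : Set α) = ⊤ → EMetric.diam S = ⊤) :
    ∃ P : Set α × Set α, SplitSpec c S P.1 P.2 := by
  by_cases hStop : EMetric.diam S = ⊤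
  · -- unbounded case
    obtain ⟨p, hp⟩ := hS
    have key : ∀ r : ℝ, ∃ y, y ∈ S ∧ r + 1 < dist p y := by
      intro r
      by_contra h
      push_neg at h
      have hb : Bornology.IsBounded S := by
        refine (Metric.isBounded_closedBall (x := p) (r := r + 1)).subset ?_
        intro y hy
        exact Metric.mem_closedBall.2 (by rw [dist_comm]; exact h y hy)
      exact (Metric.isBounded_iff_ediam_ne_top.mp hb) hStop
    let y : ℝ → α := fun r => (key r).choose
    have hyS : ∀ r, y r ∈ S := fun r => (key r).choose_spec.1
    have hyd : ∀ r, r + 1 < dist p (y r) := fun r => (key r).choose_spec.2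
    let s : ℕ → α := fun n => Nat.rec (y 0) (fun _ prev => y (dist p prev)) n
    have hsS : ∀ n, s n ∈ S := by
      intro n
      cases n with
      | zero => exact hyS 0
      | succ n => exact hyS _
    have hstep : ∀ n, dist p (s n) + 1 < dist p (s (n + 1)) := fun n => hyd _
    have hmono : StrictMono (fun n => dist p (s n)) := by
      apply strictMono_nat_of_lt_succ
      intro n
      have := hstep n
      linarith
    have hge : ∀ n : ℕ, (n : ℝ) < dist p (s n) := by
      intro n
      induction n with
      | zero =>
        have h0 : dist p (s 0) = dist p (y 0) := rfl
        rw [h0]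
        push_cast
        linarith [hyd 0]
      | succ n ih =>
        have := hstep n
        push_cast
        linarith
    set S₂ : Set α := {z | z ∈ S ∧ ∃ n, dist p z = dist p (s (2 * n + 1))} with hS₂def
    set S₁ : Set α := S \ S₂ with hS₁def
    have hmem2 : ∀ n, s (2 * n + 1) ∈ S₂ := by
      intro n
      refine ⟨hsS (2 * n + 1), n, rfl⟩
    have hmem1 : ∀ n, s (2 * n) ∈ S₁ := by
      intro n
      refine ⟨hsS _, ?_⟩
      rintro ⟨-, m, hm⟩
      have : 2 * n = 2 * m + 1 := hmono.injective (a₁ := 2 * n) (a₂ := 2 * m + 1) hm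
      omega
    have hub1 : EMetric.diam S₁ = ⊤ := by
      by_contra h
      have hb := Metric.isBounded_iff_ediam_ne_top.mpr h
      obtain ⟨C, hC⟩ := Metric.isBounded_iff.mp hb
      obtain ⟨m, hm⟩ := exists_nat_gt (C + dist p (s 0))
      have h1 : dist p (s m) ≤ dist p (s (2 * m)) := hmono.monotone (by omega : m ≤ 2 * m)
      have h2 : (m : ℝ) < dist p (s (2 * m)) := lt_of_lt_of_le (hge m) h1
      have h3 : dist p (s (2 * m)) ≤ dist p (s 0) + dist (s 0) (s (2 * m)) :=
        dist_triangle _ _ _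
      have h4 : dist (s 0) (s (2 * m)) ≤ C := hC (by simpa using hmem1 0) (hmem1 m)
      linarith
    have hub2 : EMetric.diam S₂ = ⊤ := by
      by_contra h
      have hb := Metric.isBounded_iff_ediam_ne_top.mpr h
      obtain ⟨C, hC⟩ := Metric.isBounded_iff.mp hb
      obtain ⟨m, hm⟩ := exists_nat_gt (C + dist p (s 1))
      have h1 : dist p (s m) ≤ dist p (s (2 * m + 1)) := hmono.monotone (by omega : m ≤ 2 * m + 1)
      have h2 : (m : ℝ) < dist p (s (2 * m + 1)) := lt_of_lt_of_le (hge m) h1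
      have h3 : dist p (s (2 * m + 1)) ≤ dist p (s 1) + dist (s 1) (s (2 * m + 1)) :=
        dist_triangle _ _ _
      have h4 : dist (s 1) (s (2 * m + 1)) ≤ C := hC (by simpa using hmem2 0) (hmem2 m)
      linarith
    have hd1 : Metric.diam S₁ = 0 := by simp [Metric.diam, show Metric.ediam S₁ = ⊤ from hub1]
    have hd2 : Metric.diam S₂ = 0 := by simp [Metric.diam, show Metric.ediam S₂ = ⊤ from hub2]
    refine ⟨(S₁, S₂), ⟨s 0, by simpa using hmem1 0⟩, ⟨s 1, by simpa using hmem2 0⟩, ?_, ?_, ?_, ?_, fun _ => ⟨hub1, hub2⟩⟩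
    · have : S₂ ⊆ S := fun z hz => hz.1
      rw [hS₁def, Set.diff_union_self, Set.union_eq_self_of_subset_right this]
    · exact Set.disjoint_sdiff_left
    · rw [hd1]
      have : 0 ≤ Metric.diam S := Metric.diam_nonneg
      linarith
    · intro x hx z hz
      rw [hd1, hd2]
      simpa using dist_nonneg
  · -- bounded case
    have huniv : ¬ EMetric.diam (univ : Set α) = ⊤ := fun h => hStop (hinv h)
    have hBu : Bornology.IsBounded (univ : Set α) :=
      Metric.isBounded_iff_ediam_ne_top.mpr huniv
    have hBS : Bornology.IsBounded S := hBu.subset (subset_univ S)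
    obtain ⟨a, ha, b, hb, hab⟩ := Set.not_subsingleton_iff.mp hns
    have hd : 0 < Metric.diam S := by
      have h1 := Metric.dist_le_diam_of_mem hBS ha hb
      have h2 : 0 < dist a b := dist_pos.mpr hab
      linarith
    set r : ℝ := Metric.diam S / 2 with hr_def
    have hr : 0 < r := by positivity
    have hrlt : r < Metric.diam (univ : Set α) := by
      have := Metric.diam_mono (subset_univ S) hBu
      rw [hr_def]; linarith
    obtain ⟨E, haE, hdE, hsep⟩ := hud a r hr hrlt
    have hBE : Bornology.IsBounded E := hBu.subset (subset_univ E)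
    set S₁ : Set α := S ∩ E with h1def
    set S₂ : Set α := S \ E with h2def
    have ne₂ : S₂.Nonempty := by
      rw [h2def]
      by_contra h
      rw [Set.not_nonempty_iff_eq_empty, Set.diff_eq_empty] at h
      have := Metric.diam_mono h hBE
      linarith [lt_of_le_of_lt (le_trans this hdE) (by linarith : r < Metric.diam S)]
    refine ⟨(S₁, S₂), ⟨a, ha, haE⟩, ne₂, ?_, ?_, ?_, ?_, ?_⟩
    · exact (Set.inter_union_diff S E).symm
    · exact Set.disjoint_sdiff_right.mono_left Set.inter_subset_right
    · calc Metric.diam S₁ ≤ Metric.diam E := Metric.diam_mono Set.inter_subset_right hBE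
        _ ≤ r := hdE
        _ = (1/2) * Metric.diam S := by rw [hr_def]; ring
    · intro x hx z hz
      have hx' : x ∈ E := hx.2
      have hz' : z ∈ Eᶜ := hz.2
      have h5 : r / c ≤ dist x z := hsep x hx' z hz'
      have hd1 : Metric.diam S₁ ≤ Metric.diam S :=
        Metric.diam_mono Set.inter_subset_left hBS
      have hd2 : Metric.diam S₂ ≤ Metric.diam S :=
        Metric.diam_mono Set.diff_subset hBS
      have hmax : max (Metric.diam S₁) (Metric.diam S₂) ≤ Metric.diam S := max_le hd1 hd2
      have hcpos : (0:ℝ) < c := lt_of_lt_of_le one_pos hc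
      have hinv' : (0:ℝ) ≤ (2 * c)⁻¹ := by positivity
      have h6 : (2 * c)⁻¹ * max (Metric.diam S₁) (Metric.diam S₂)
          ≤ (2 * c)⁻¹ * Metric.diam S := mul_le_mul_of_nonneg_left hmax hinv'
      have h7 : (2 * c)⁻¹ * Metric.diam S = r / c := by
        rw [hr_def]; field_simp
      linarith
    · intro h
      exact absurd (hinv h) hStop

/-- The splitting hypothesis, packaged. -/
def SplitHyp (α : Type*) [MetricSpace α] (c : ℝ) : Prop :=
  ∀ S : Set α, S.Nonempty → ¬ S.Subsingleton →
    (EMetric.diam (univ : Set α) = ⊤ → EMetric.diam S = ⊤) →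
    ∃ P : Set α × Set α, SplitSpec c S P.1 P.2

open Classical in
noncomputable def pairFn {α : Type*} [MetricSpace α] (c : ℝ) (H : SplitHyp α c)
    (S : Set α) : Set α × Set α :=
  if h : S.Nonempty ∧ ¬ S.Subsingleton ∧
      (EMetric.diam (univ : Set α) = ⊤ → EMetric.diam S = ⊤)
  then (H S h.1 h.2.1 h.2.2).choose
  else (S, ∅)

noncomputable def gFn {α : Type*} [MetricSpace α] (c : ℝ) (H : SplitHyp α c) :
    List Bool → Set α
  | [] => univ
  | (i :: w) => if i then (pairFn c H (gFn c H w)).1 else (pairFn c H (gFn c H w)).2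

theorem gFn_cons_true {α : Type*} [MetricSpace α] (c : ℝ) (H : SplitHyp α c)
    (v : List Bool) : gFn c H (true :: v) = (pairFn c H (gFn c H v)).1 := rfl

theorem gFn_cons_false {α : Type*} [MetricSpace α] (c : ℝ) (H : SplitHyp α c)
    (v : List Bool) : gFn c H (false :: v) = (pairFn c H (gFn c H v)).2 := rfl

theorem gFn_sub {α : Type*} [MetricSpace α] (c : ℝ) (H : SplitHyp α c)
    (v : List Bool) (i : Bool) : gFn c H (i :: v) ⊆ gFn c H v := by
  cases i
  · rw [gFn_cons_false]
    unfold pairFn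
    split_ifs with h
    · have spec := (H (gFn c H v) h.1 h.2.1 h.2.2).choose_spec
      intro x hx
      rw [spec.2.2.1]
      exact Or.inr hx
    · exact Set.empty_subset _
  · rw [gFn_cons_true]
    unfold pairFn
    split_ifs with h
    · have spec := (H (gFn c H v) h.1 h.2.1 h.2.2).choose_spec
      intro x hx
      rw [spec.2.2.1]
      exact Or.inl hx
    · exact subset_rfl

theorem gFn_inv {α : Type*} [MetricSpace α] [Nonempty α] (c : ℝ) (H : SplitHyp α c)
    (v : List Bool) :
    (gFn c H v).Nonempty → ¬ (gFn c H v).Subsingleton →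
    (EMetric.diam (univ : Set α) = ⊤ → EMetric.diam (gFn c H v) = ⊤) := by
  induction v with
  | nil => intro _ _ h; simpa [gFn] using h
  | cons i w ih =>
    intro hne hns htop
    by_cases h : (gFn c H w).Nonempty ∧ ¬ (gFn c H w).Subsingleton ∧
        (EMetric.diam (univ : Set α) = ⊤ → EMetric.diam (gFn c H w) = ⊤)
    · have spec := (H (gFn c H w) h.1 h.2.1 h.2.2).choose_spec
      have hpair : pairFn c H (gFn c H w) = (H (gFn c H w) h.1 h.2.1 h.2.2).choose := by
        unfold pairFn
        rw [dif_pos h]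
      cases i
      · rw [gFn_cons_false, hpair]
        exact (spec.2.2.2.2.2.2 htop).2
      · rw [gFn_cons_true, hpair]
        exact (spec.2.2.2.2.2.2 htop).1
    · have hpair : pairFn c H (gFn c H w) = (gFn c H w, ∅) := by
        unfold pairFn
        rw [dif_neg h]
      cases i
      · rw [gFn_cons_false, hpair] at hne
        simp at hne
      · rw [gFn_cons_true, hpair] at hne hns ⊢
        exact absurd ⟨hne, hns, ih hne hns⟩ h

theorem gFn_split {α : Type*} [MetricSpace α] [Nonempty α] (c : ℝ) (H : SplitHyp α c)
    (v : List Bool) (hne : (gFn c H v).Nonempty) (hns : ¬ (gFn c H v).Subsingleton) :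
    SplitSpec c (gFn c H v) (gFn c H (true :: v)) (gFn c H (false :: v)) := by
  have h : (gFn c H v).Nonempty ∧ ¬ (gFn c H v).Subsingleton ∧
      (EMetric.diam (univ : Set α) = ⊤ → EMetric.diam (gFn c H v) = ⊤) :=
    ⟨hne, hns, gFn_inv c H v hne hns⟩
  have spec := (H (gFn c H v) h.1 h.2.1 h.2.2).choose_spec
  have hpair : pairFn c H (gFn c H v) = (H (gFn c H v) h.1 h.2.1 h.2.2).choose := by
    unfold pairFn
    rw [dif_pos h]
  rw [gFn_cons_true, gFn_cons_false, hpair]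
  exact spec

theorem gFn_single {α : Type*} [MetricSpace α] (c : ℝ) (H : SplitHyp α c)
    (v : List Bool) (hss : (gFn c H v).Subsingleton) :
    gFn c H (true :: v) = gFn c H v ∧ gFn c H (false :: v) = (∅ : Set α) := by
  have h : ¬ ((gFn c H v).Nonempty ∧ ¬ (gFn c H v).Subsingleton ∧
      (EMetric.diam (univ : Set α) = ⊤ → EMetric.diam (gFn c H v) = ⊤)) := by
    rintro ⟨-, hns, -⟩
    exact hns hss
  have hpair : pairFn c H (gFn c H v) = (gFn c H v, ∅) := by
    unfold pairFn
    rw [dif_neg h]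
  exact ⟨by rw [gFn_cons_true, hpair], by rw [gFn_cons_false, hpair]⟩

/-- A `c`-uniformly disconnected metric space admits a binary tree
decomposition `{X_w}` in which each non-singleton piece splits into two disjoint pieces,
one of at most half the diameter, with relative separation `(2c)⁻¹`.  Words are lists over
`Bool` (`w ++ [true]` is the child `w1`, `w ++ [false]` the child `w2`). -/
theorem tree_of_uniformlyDisconnected {α : Type*} [MetricSpace α] [Nonempty α]
    (c : ℝ) (hc : 1 ≤ c)
    (hud : ∀ x : α, ∀ r : ℝ, 0 < r → r < Metric.diam (univ : Set α) →
      ∃ E : Set α, x ∈ E ∧ Metric.diam E ≤ r ∧ ∀ y ∈ E, ∀ z ∈ Eᶜ, r / c ≤ dist y z) :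
    ∃ (W : Set (List Bool)) (Xf : List Bool → Set α),
      (∀ (w : List Bool) (i : Bool), w ++ [i] ∈ W → w ∈ W) ∧
      [] ∈ W ∧ Xf [] = univ ∧
      (∀ w ∈ W, (Xf w).Nonempty) ∧
      (∀ w ∈ W, ¬ (Xf w).Subsingleton →
        w ++ [true] ∈ W ∧ w ++ [false] ∈ W ∧
        Xf w = Xf (w ++ [true]) ∪ Xf (w ++ [false]) ∧
        Disjoint (Xf (w ++ [true])) (Xf (w ++ [false])) ∧
        Metric.diam (Xf (w ++ [true])) ≤ (1/2) * Metric.diam (Xf w) ∧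
        ∀ x ∈ Xf (w ++ [true]), ∀ y ∈ Xf (w ++ [false]),
          (2 * c)⁻¹ * max (Metric.diam (Xf (w ++ [true])))
              (Metric.diam (Xf (w ++ [false]))) ≤ dist x y) ∧
      (∀ w ∈ W, (Xf w).Subsingleton →
        w ++ [true] ∈ W ∧ w ++ [false] ∉ W ∧ Xf (w ++ [true]) = Xf w) := by
  have H : SplitHyp α c := fun S h1 h2 h3 => exists_split c hc hud S h1 h2 h3
  have hrev : ∀ (w : List Bool) (i : Bool), (w ++ [i]).reverse = i :: w.reverse := by
    intro w i; simp
  refine ⟨{w | (gFn c H w.reverse).Nonempty}, fun w => gFn c H w.reverse,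
    ?_, ?_, ?_, ?_, ?_, ?_⟩
  · intro w i hw
    simp only [mem_setOf_eq, hrev] at hw ⊢
    exact hw.mono (gFn_sub c H w.reverse i)
  · show (gFn c H [].reverse).Nonempty
    simp only [List.reverse_nil]
    show (univ : Set α).Nonempty
    exact univ_nonempty
  · rfl
  · intro w hw; exact hw
  · intro w hw hns
    have spec := gFn_split c H w.reverse hw hns
    simp only [mem_setOf_eq, hrev]
    exact ⟨spec.1, spec.2.1, spec.2.2.1, spec.2.2.2.1, spec.2.2.2.2.1, spec.2.2.2.2.2.1⟩
  · intro w hw hss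
    obtain ⟨h1, h2⟩ := gFn_single c H w.reverse hss
    refine ⟨?_, ?_, ?_⟩
    · show (gFn c H (w ++ [true]).reverse).Nonempty
      rw [hrev, h1]; exact hw
    · show ¬ (gFn c H (w ++ [false]).reverse).Nonempty
      rw [hrev, h2]; simp
    · show gFn c H (w ++ [true]).reverse = gFn c H w.reverse
      rw [hrev, h1]
end
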